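/- Let V be a vector space of dimension at least 3 over a field F of characteristic ≠ 2 with a nondegenerate symmetric bilinear form. Let l be a nondegenerate 2-dimensional subspace (a line) and ⟨a⟩ a nondegenerate 1-dimensional subspace (a point) with a ∉ l. Then there are at most two nondegenerate 1-dimensional subspaces ⟨x⟩ ≤ l such that the 2-dimensional subspace ⟨a, x⟩ is degenerate. -/

import Mathlib

open Module

section Aux

variable {F V : Type*} [Field F] [AddCommGroup V] [Module F V]

lemma span_eq_of_smul {x y : V} (hx : x ≠ 0) (c : F) (hc : x = c • y) :
    Submodule.span F {x} = Submodule.span F {y} := by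
  have hcne : c ≠ 0 := by rintro rfl; simp at hc; exact hx hc
  apply le_antisymm
  · rw [Submodule.span_singleton_le_iff_mem, hc]
    exact Submodule.smul_mem _ _ (Submodule.mem_span_singleton_self y)
  · rw [Submodule.span_singleton_le_iff_mem]
    have : y = c⁻¹ • x := by rw [hc, smul_smul, inv_mul_cancel₀ hcne, one_smul]
    rw [this]; exact Submodule.smul_mem _ _ (Submodule.mem_span_singleton_self x)

/-- Two nonzero vectors with distinct spans are linearly independent. -/
lemma aux_indep {x y : V} (hx : x ≠ 0) (hy : y ≠ 0)
    (hne : Submodule.span F {x} ≠ Submodule.span F {y}) :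
    LinearIndependent F ![x, y] := by
  rw [LinearIndependent.pair_iff]
  intro s t hst
  constructor
  · by_contra hs
    apply hne
    refine span_eq_of_smul hx (-(s⁻¹ * t)) ?_
    have h1 : s • x = -(t • y) := eq_neg_of_add_eq_zero_left hst
    calc x = s⁻¹ • (s • x) := by rw [smul_smul, inv_mul_cancel₀ hs, one_smul]
    _ = -(s⁻¹ * t) • y := by rw [h1, smul_neg, smul_smul, neg_smul]
  · by_contra ht
    apply hne.symm
    refine span_eq_of_smul hy (-(t⁻¹ * s)) ?_
    have h1 : t • y = -(s • x) := eq_neg_of_add_eq_zero_right hst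
    calc y = t⁻¹ • (t • y) := by rw [smul_smul, inv_mul_cancel₀ ht, one_smul]
    _ = -(t⁻¹ * s) • x := by rw [h1, smul_neg, smul_smul, neg_smul]

/-- A nondegenerate point has a generator with nonzero self-pairing. -/
lemma aux_point (B : LinearMap.BilinForm F V) {x : V} (hx : x ≠ 0)
    (h : (B.restrict (Submodule.span F {x})).Nondegenerate) : B x x ≠ 0 := by
  intro hxx
  have hmem : x ∈ Submodule.span F {x} := Submodule.mem_span_singleton_self x
  have := h.1 ⟨x, hmem⟩ (fun n => by
    obtain ⟨c, hc⟩ := Submodule.mem_span_singleton.mp n.2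
    show B x n.1 = 0
    rw [← hc, map_smul, smul_eq_mul, hxx, mul_zero])
  exact hx (by simpa using congrArg Subtype.val this)

/-- If the plane spanned by `a` and `x` is degenerate, the Gram determinant vanishes. -/
lemma aux_plane (B : LinearMap.BilinForm F V) {a x : V}
    (h : ¬ (B.restrict (Submodule.span F {a} ⊔ Submodule.span F {x})).Nondegenerate) :
    B a a * B x x - B a x * B x a = 0 := by
  by_contra hq
  apply h
  refine ⟨?_, ?_⟩
  intro m hm
  obtain ⟨p, hp, q, hqm, hpq⟩ := Submodule.mem_sup.mp m.2
  obtain ⟨α, rfl⟩ := Submodule.mem_span_singleton.mp hp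
  obtain ⟨β, rfl⟩ := Submodule.mem_span_singleton.mp hqm
  have hma : B m.1 a = 0 := by
    have := hm ⟨a, Submodule.mem_sup_left (Submodule.mem_span_singleton_self a)⟩
    simpa using this
  have hmx : B m.1 x = 0 := by
    have := hm ⟨x, Submodule.mem_sup_right (Submodule.mem_span_singleton_self x)⟩
    simpa using this
  rw [← hpq] at hma hmx
  simp only [map_add, map_smul, LinearMap.add_apply, LinearMap.smul_apply,
    smul_eq_mul] at hma hmx
  have hα : α = 0 := by
    have : α * (B a a * B x x - B a x * B x a) = 0 := by
      linear_combination B x x * hma - B x a * hmx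
    exact (mul_eq_zero.mp this).resolve_right hq
  have hβ : β = 0 := by
    have : β * (B a a * B x x - B a x * B x a) = 0 := by
      linear_combination B a a * hmx - B a x * hma
    exact (mul_eq_zero.mp this).resolve_right hq
  have : m.1 = 0 := by rw [← hpq, hα, hβ]; simp
  exact Subtype.ext this
  intro m hm
  obtain ⟨p, hp, q, hqm, hpq⟩ := Submodule.mem_sup.mp m.2
  obtain ⟨α, rfl⟩ := Submodule.mem_span_singleton.mp hp
  obtain ⟨β, rfl⟩ := Submodule.mem_span_singleton.mp hqm
  have hma : B a m.1 = 0 := by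
    have := hm ⟨a, Submodule.mem_sup_left (Submodule.mem_span_singleton_self a)⟩
    simpa using this
  have hmx : B x m.1 = 0 := by
    have := hm ⟨x, Submodule.mem_sup_right (Submodule.mem_span_singleton_self x)⟩
    simpa using this
  rw [← hpq] at hma hmx
  simp only [map_add, map_smul, LinearMap.add_apply, LinearMap.smul_apply,
    smul_eq_mul] at hma hmx
  have hα : α = 0 := by
    have : α * (B a a * B x x - B a x * B x a) = 0 := by
      linear_combination B x x * hma - B a x * hmx
    exact (mul_eq_zero.mp this).resolve_right hq
  have hβ : β = 0 := by
    have : β * (B a a * B x x - B a x * B x a) = 0 := by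
      linear_combination B a a * hmx - B x a * hma
    exact (mul_eq_zero.mp this).resolve_right hq
  have : m.1 = 0 := by rw [← hpq, hα, hβ]; simp
  exact Subtype.ext this

/-- Three distinct degenerate-plane points on a nondegenerate line: contradiction. -/
lemma aux_three (h2 : (2 : F) ≠ 0)
    (B : LinearMap.BilinForm F V) (hsymm : B.IsSymm)
    (l : Submodule F V) (hl2 : finrank F l = 2) (hl : (B.restrict l).Nondegenerate)
    (a : V) (ha : B a a ≠ 0)
    {x y z : V} (hxl : x ∈ l) (hyl : y ∈ l) (hzl : z ∈ l)
    (hx : x ≠ 0) (hy : y ≠ 0) (hz : z ≠ 0)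
    (hBxx : B x x ≠ 0) (hByy : B y y ≠ 0)
    (hqx : B a a * B x x - B a x * B x a = 0)
    (hqy : B a a * B y y - B a y * B y a = 0)
    (hqz : B a a * B z z - B a z * B z a = 0)
    (hxy : Submodule.span F {x} ≠ Submodule.span F {y})
    (hxz : Submodule.span F {x} ≠ Submodule.span F {z})
    (hyz : Submodule.span F {y} ≠ Submodule.span F {z}) : False := by
  have hsym : ∀ u v : V, B u v = B v u := fun u v => hsymm.eq u v
  rw [hsym x a] at hqx
  rw [hsym y a] at hqy
  rw [hsym z a] at hqz
  -- x, y independent, spanning l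
  have hli : LinearIndependent F ![x, y] := aux_indep hx hy hxy
  haveI : FiniteDimensional F l := Module.finite_of_finrank_pos (by omega)
  have hspan : Submodule.span F {x, y} = l := by
    apply Submodule.eq_of_le_of_finrank_le
    · rw [Submodule.span_le]; rintro u (rfl | rfl) <;> assumption
    · rw [hl2]
      have hr : ({x, y} : Set V) = Set.range ![x, y] := by
        ext u
        simp only [Set.mem_insert_iff, Set.mem_singleton_iff, Set.mem_range]
        constructor
        · rintro (rfl | rfl)
          · exact ⟨0, rfl⟩
          · exact ⟨1, rfl⟩
        · rintro ⟨i, rfl⟩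
          fin_cases i
          · left; rfl
          · right; rfl
      rw [hr, finrank_span_eq_card hli]
      simp
  -- z = s x + t y with s t ≠ 0
  obtain ⟨s, t, hst⟩ := Submodule.mem_span_pair.mp (hspan ▸ hzl)
  have hs : s ≠ 0 := by
    rintro rfl
    simp only [zero_smul, zero_add] at hst
    exact hyz (span_eq_of_smul hz t hst.symm).symm
  have ht : t ≠ 0 := by
    rintro rfl
    simp only [zero_smul, add_zero] at hst
    exact hxz (span_eq_of_smul hz s hst.symm).symm
  -- expand q z = 0
  have hBz : B a a * B z z - B a z * B a z = 0 := hqz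
  rw [← hst] at hBz
  simp only [map_add, map_smul, LinearMap.add_apply, LinearMap.smul_apply,
    smul_eq_mul] at hBz
  rw [hsym y x] at hBz
  have key : B a a * B x y - B a x * B a y = 0 := by
    have h2st : 2 * s * t ≠ 0 := by
      simp [mul_ne_zero, h2, hs, ht]
    have hfactor : 2 * s * t * (B a a * B x y - B a x * B a y) = 0 := by
      linear_combination hBz - s * s * hqx - t * t * hqy
    exact (mul_eq_zero.mp hfactor).resolve_left h2st
  -- B a x and B a y are nonzero
  have hfx : B a x ≠ 0 := by
    intro h0
    simp only [h0, mul_zero, zero_mul, sub_zero] at hqx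
    exact ha ((mul_eq_zero.mp hqx).resolve_right hBxx)
  have hfy : B a y ≠ 0 := by
    intro h0
    simp only [h0, mul_zero, zero_mul, sub_zero] at hqy
    exact ha ((mul_eq_zero.mp hqy).resolve_right hByy)
  -- the radical vector
  set w : V := B a y • x - B a x • y with hw
  have hwl : w ∈ l := Submodule.sub_mem l (Submodule.smul_mem l _ hxl)
    (Submodule.smul_mem l _ hyl)
  have hwne : w ≠ 0 := by
    intro h0
    have := (LinearIndependent.pair_iff.mp hli (B a y) (-(B a x)) (by
      rw [neg_smul, ← sub_eq_add_neg]; exact h0)).1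
    exact hfy this
  have : (⟨w, hwl⟩ : l) = 0 := by
    apply hl.1
    intro n
    have hn : (n : V) ∈ Submodule.span F {x, y} := by rw [hspan]; exact n.2
    obtain ⟨u, v, huv⟩ := Submodule.mem_span_pair.mp hn
    show B w n.1 = 0
    rw [← huv, hw]
    simp only [map_sub, map_add, map_smul, LinearMap.sub_apply, LinearMap.add_apply,
      LinearMap.smul_apply, smul_eq_mul]
    rw [hsym y x]
    have e1 : B a a * (B a y * B x x - B a x * B x y) = 0 := by
      linear_combination B a y * hqx - B a x * key
    have e2 : B a a * (B a y * B x y - B a x * B y y) = 0 := by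
      linear_combination B a y * key - B a x * hqy
    have f1 : B a y * B x x - B a x * B x y = 0 := (mul_eq_zero.mp e1).resolve_left ha
    have f2 : B a y * B x y - B a x * B y y = 0 := (mul_eq_zero.mp e2).resolve_left ha
    linear_combination u * f1 + v * f2
  exact hwne (by simpa using congrArg Subtype.val this)

end Aux

/-- In a space of dimension at least 3 with a nondegenerate symmetric bilinear form
(char ≠ 2), if `l` is a nondegenerate 2-dimensional subspace (a line) and `⟨a⟩` a
nondegenerate 1-dimensional subspace (a point) with `a ∉ l`, then there are at most
two nondegenerate 1-dimensional subspaces `P ≤ l` such that `⟨a⟩ + P` is degenerate. -/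
theorem point_line_at_most_two_noncollinear
    {F V : Type*} [Field F] [AddCommGroup V] [Module F V]
    (h2 : (2 : F) ≠ 0) (hdim : 3 ≤ finrank F V)
    (B : LinearMap.BilinForm F V) (hsymm : B.IsSymm) (hB : B.Nondegenerate)
    (l : Submodule F V) (hl2 : finrank F l = 2) (hl : (B.restrict l).Nondegenerate)
    (a : V) (ha : B a a ≠ 0) (hal : a ∉ l) :
    ∃ P₁ P₂ : Submodule F V, ∀ P : Submodule F V,
      P ≤ l → finrank F P = 1 → (B.restrict P).Nondegenerate →
      ¬ (B.restrict (Submodule.span F {a} ⊔ P)).Nondegenerate →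
      P = P₁ ∨ P = P₂ := by
  classical
  -- every solution P is spanned by some x with the right properties
  have hgen : ∀ P : Submodule F V, P ≤ l → finrank F P = 1 →
      (B.restrict P).Nondegenerate →
      ¬ (B.restrict (Submodule.span F {a} ⊔ P)).Nondegenerate →
      ∃ x : V, x ∈ l ∧ x ≠ 0 ∧ P = Submodule.span F {x} ∧ B x x ≠ 0 ∧
        B a a * B x x - B a x * B x a = 0 := by
    intro P hPl hP1 hPnd hPdeg
    haveI : FiniteDimensional F P := Module.finite_of_finrank_pos (by omega)
    obtain ⟨⟨x, hxP⟩, hx0, hxgen⟩ := finrank_eq_one_iff'.mp hP1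
    have hxne : x ≠ 0 := fun h => hx0 (Subtype.ext h)
    have hPx : P = Submodule.span F {x} := by
      apply le_antisymm
      · intro v hv
        obtain ⟨c, hc⟩ := hxgen ⟨v, hv⟩
        exact Submodule.mem_span_singleton.mpr ⟨c, congrArg Subtype.val hc⟩
      · rw [Submodule.span_singleton_le_iff_mem]; exact hxP
    subst hPx
    exact ⟨x, hPl (Submodule.mem_span_singleton_self x), hxne, rfl,
      aux_point B hxne hPnd, aux_plane B hPdeg⟩
  by_cases hP1 : ∃ P : Submodule F V, P ≤ l ∧ finrank F P = 1 ∧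
      (B.restrict P).Nondegenerate ∧
      ¬ (B.restrict (Submodule.span F {a} ⊔ P)).Nondegenerate
  · obtain ⟨P₁, hP₁l, hP₁1, hP₁nd, hP₁deg⟩ := hP1
    by_cases hP2 : ∃ P : Submodule F V, P ≠ P₁ ∧ P ≤ l ∧ finrank F P = 1 ∧
        (B.restrict P).Nondegenerate ∧
        ¬ (B.restrict (Submodule.span F {a} ⊔ P)).Nondegenerate
    · obtain ⟨P₂, hP₂ne, hP₂l, hP₂1, hP₂nd, hP₂deg⟩ := hP2
      refine ⟨P₁, P₂, fun P hPl hP1' hPnd hPdeg => ?_⟩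
      by_contra hc
      push_neg at hc
      obtain ⟨hne1, hne2⟩ := hc
      obtain ⟨x, hxl, hx, rfl, hBxx, hqx⟩ := hgen P₁ hP₁l hP₁1 hP₁nd hP₁deg
      obtain ⟨y, hyl, hy, rfl, hByy, hqy⟩ := hgen P₂ hP₂l hP₂1 hP₂nd hP₂deg
      obtain ⟨z, hzl, hz, rfl, hBzz, hqz⟩ := hgen P hPl hP1' hPnd hPdeg
      exact aux_three h2 B hsymm l hl2 hl a ha hxl hyl hzl hx hy hz hBxx hByy
        hqx hqy hqz (fun h => hP₂ne h.symm) (fun h => hne1 h.symm)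
        (fun h => hne2 h.symm)
    · push_neg at hP2
      exact ⟨P₁, P₁, fun P hPl hP1' hPnd hPdeg => Or.inl (by
        by_contra hne
        exact hPdeg (hP2 P hne hPl hP1' hPnd))⟩
  · push_neg at hP1
    exact ⟨⊥, ⊥, fun P hPl hP1' hPnd hPdeg =>
      absurd (hP1 P hPl hP1' hPnd) hPdeg⟩
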